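/- arXiv:1804.00037 — 3 statements merged into one kernel-verified Lean document; each statement's English description precedes it below -/
import Mathlib

section
/- Every non-blocking reactive supervisor S for an open discrete event system P satisfies that the prefix-closure of the marked input-output language of the supervised plant equals its input-output language: closure(L_{io,m}(S/P)) = L_{io}(S/P). -/
/-- Letterwise projection of an extended word to its input-internal component. -/
def Pxp {Sx Sp Sy : Type} (w : List (Sx × Sp × Sy)) : List (Sx × Sp) :=
  w.map fun t => (t.1, t.2.1)

/-- Letterwise projection of an extended word to its input component. -/
def Px {Sx Sp Sy : Type} (w : List (Sx × Sp × Sy)) : List Sx :=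
  w.map fun t => t.1

/-- Letterwise projection of an extended word to its output component. -/
def Py {Sx Sp Sy : Type} (w : List (Sx × Sp × Sy)) : List Sy :=
  w.map fun t => t.2.2

/-- Letterwise projection of an extended word to its input-output component. -/
def Pxy {Sx Sp Sy : Type} (w : List (Sx × Sp × Sy)) : List (Sx × Sy) :=
  w.map fun t => (t.1, t.2.2)

/-- Prefix-closure of a language. -/
def prefCl {α : Type} (L : Set (List α)) : Set (List α) :=
  {u | ∃ w ∈ L, u <+: w}

/-- An open discrete event system: states, partial transition function
`delta : Q → Sx → Sp → Option Q`, deterministic output function `gamma`,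
initial state `q0`, and marked states `Qm`. -/
structure OpenDES (Q Sp Sx Sy : Type) where
  q0 : Q
  delta : Q → Sx → Sp → Option Q
  gamma : Q → Sp → Sy
  Qm : Set Q

namespace OpenDES

variable {Q Sp Sx Sy : Type}

/-- Input-enabledness: every state accepts every input with some internal event. -/
def InputEnabled (P : OpenDES Q Sp Sx Sy) : Prop :=
  ∀ q x, ∃ σ, (P.delta q x σ).isSome

/-- The transition function extended to input-internal words (partial). -/
def run (P : OpenDES Q Sp Sx Sy) : Q → List (Sx × Sp) → Option Q
  | q, [] => some q
  | q, (x, σ) :: w =>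
      match P.delta q x σ with
      | some q' => P.run q' w
      | none => none

/-- The extended input-output language `L_e(P)`, defined recursively. -/
inductive Le (P : OpenDES Q Sp Sx Sy) : List (Sx × Sp × Sy) → Prop
  | nil : Le P []
  | snoc {w : List (Sx × Sp × Sy)} {x : Sx} {σ : Sp} {y : Sy} {q : Q} :
      Le P w →
      P.run P.q0 (Pxp w) = some q →
      (P.delta q x σ).isSome →
      y = P.gamma q σ →
      Le P (w ++ [(x, σ, y)])

/-- `L_e(P)` as a set. -/
def LeSet (P : OpenDES Q Sp Sx Sy) : Set (List (Sx × Sp × Sy)) := {w | P.Le w}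

/-- The marked extended input-output language `L_{e,m}(P)`. -/
def Lem (P : OpenDES Q Sp Sx Sy) : Set (List (Sx × Sp × Sy)) :=
  {w | P.Le w ∧ ∃ q, P.run P.q0 (Pxp w) = some q ∧ q ∈ P.Qm}

/-- The input-output language `L_{io}(P)`. -/
def Lio (P : OpenDES Q Sp Sx Sy) : Set (List (Sx × Sy)) := Pxy '' P.LeSet

/-- The marked input-output language `L_{io,m}(P)`. -/
def Liom (P : OpenDES Q Sp Sx Sy) : Set (List (Sx × Sy)) := Pxy '' P.Lem

/-- The supervised extended language `L_e(S/P)` for a supervisor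
`S : (Sx × Sp)* → 2^{Sp}`. -/
inductive SupLe (P : OpenDES Q Sp Sx Sy) (S : List (Sx × Sp) → Set Sp) :
    List (Sx × Sp × Sy) → Prop
  | nil : SupLe P S []
  | snoc {w : List (Sx × Sp × Sy)} {x : Sx} {σ : Sp} {y : Sy} :
      SupLe P S w →
      P.Le (w ++ [(x, σ, y)]) →
      σ ∈ S (Pxp w) →
      SupLe P S (w ++ [(x, σ, y)])

/-- `L_e(S/P)` as a set. -/
def SupLeSet (P : OpenDES Q Sp Sx Sy) (S : List (Sx × Sp) → Set Sp) :
    Set (List (Sx × Sp × Sy)) := {w | SupLe P S w}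

/-- The supervised input-output language `L_{io}(S/P)`. -/
def SupLio (P : OpenDES Q Sp Sx Sy) (S : List (Sx × Sp) → Set Sp) :
    Set (List (Sx × Sy)) := Pxy '' P.SupLeSet S

/-- The supervised marked input-output language `L_{io,m}(S/P)`. -/
def SupLiom (P : OpenDES Q Sp Sx Sy) (S : List (Sx × Sp) → Set Sp) :
    Set (List (Sx × Sy)) := P.SupLio S ∩ P.Liom

/-- A supervisor is non-blocking if the prefix-closure of
`P_xp(L_e(S/P) ∩ L_{e,m}(P))` equals `P_xp(L_e(S/P))`. -/
def Nonblocking (P : OpenDES Q Sp Sx Sy) (S : List (Sx × Sp) → Set Sp) : Prop :=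
  prefCl (Pxp '' (P.SupLeSet S ∩ P.Lem)) = Pxp '' P.SupLeSet S

/-- The uncontrollable input-output event set `Σ^{io}_u`. -/
def SigmaIOu (P : OpenDES Q Sp Sx Sy) (Suc : Set Sp) : Set (Sx × Sy) :=
  {xy | ∃ q σu, σu ∈ Suc ∧ (P.delta q xy.1 σu).isSome ∧ xy.2 = P.gamma q σu}

/-- Output controllability: `K̄·Σ^{io}_u ∩ L_{io}(P) ⊆ K̄`. -/
def OutputControllable (P : OpenDES Q Sp Sx Sy) (Suc : Set Sp)
    (K : Set (List (Sx × Sy))) : Prop :=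
  ∀ w ∈ prefCl K, ∀ xy ∈ P.SigmaIOu Suc, w ++ [xy] ∈ P.Lio → w ++ [xy] ∈ prefCl K

end OpenDES

section Aux

variable {Q Sp Sx Sy : Type} {P : OpenDES Q Sp Sx Sy} {S : List (Sx × Sp) → Set Sp}

lemma Pxp_append (a b : List (Sx × Sp × Sy)) : Pxp (a ++ b) = Pxp a ++ Pxp b :=
  List.map_append

lemma Pxp_take (a : List (Sx × Sp × Sy)) (n : ℕ) : Pxp (a.take n) = (Pxp a).take n :=
  List.map_take

lemma Pxy_take (a : List (Sx × Sp × Sy)) (n : ℕ) : Pxy (a.take n) = (Pxy a).take n :=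
  List.map_take

lemma Pxp_length (a : List (Sx × Sp × Sy)) : (Pxp a).length = a.length :=
  List.length_map _

lemma le_prefix {w u : List (Sx × Sp × Sy)} (h : P.Le w) (hp : u <+: w) : P.Le u := by
  induction h generalizing u with
  | nil => simpa [List.prefix_nil.mp hp] using OpenDES.Le.nil (P := P)
  | @snoc w x σ y q hw hrun hdel hy ih =>
    rcases List.prefix_concat_iff.mp hp with h1 | h1
    · subst h1; exact OpenDES.Le.snoc hw hrun hdel hy
    · exact ih h1

lemma supLe_prefix {w u : List (Sx × Sp × Sy)} (h : P.SupLe S w) (hp : u <+: w) :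
    P.SupLe S u := by
  induction h generalizing u with
  | nil => simpa [List.prefix_nil.mp hp] using OpenDES.SupLe.nil (P := P) (S := S)
  | @snoc w x σ y hw hle hctrl ih =>
    rcases List.prefix_concat_iff.mp hp with h1 | h1
    · subst h1; exact OpenDES.SupLe.snoc hw hle hctrl
    · exact ih h1

lemma supLe_le {w : List (Sx × Sp × Sy)} (h : P.SupLe S w) : P.Le w := by
  induction h with
  | nil => exact OpenDES.Le.nil
  | snoc _ hle _ _ => exact hle

lemma le_pxp_inj {w v : List (Sx × Sp × Sy)} (hw : P.Le w) (hv : P.Le v)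
    (h : Pxp w = Pxp v) : w = v := by
  induction hw generalizing v with
  | nil =>
    have : Pxp v = [] := h.symm
    exact (List.map_eq_nil_iff.mp this).symm
  | @snoc w x σ y q hwle hrun hdel hy ih =>
    cases hv with
    | nil =>
      exfalso
      have := congrArg List.length h
      simp [Pxp] at this
    | @snoc v' x' σ' y' q' hv'le hrun' hdel' hy' =>
      rw [Pxp_append, Pxp_append] at h
      obtain ⟨h1, h2⟩ := List.append_inj' h rfl
      simp [Pxp] at h2
      obtain ⟨hx, hσ⟩ := h2
      have hwv : w = v' := ih hv'le h1
      subst hwv hx hσ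
      rw [hrun] at hrun'
      cases hrun'
      rw [hy, hy']

end Aux

/-- Every non-blocking reactive supervisor `S` (mapping into
control patterns, i.e. sets of internal events containing the uncontrollable
events `Suc`) satisfies `closure(L_{io,m}(S/P)) = L_{io}(S/P)`. -/
theorem nonblocking_supervisor_io_closure
    {Q Sp Sx Sy : Type} (P : OpenDES Q Sp Sx Sy) (Suc : Set Sp)
    (S : List (Sx × Sp) → Set Sp) (hS : ∀ w, Suc ⊆ S w)
    (hNB : P.Nonblocking S) :
    prefCl (P.SupLiom S) = P.SupLio S := by
  ext u
  constructor
  · rintro ⟨m, hm, hpre⟩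
    obtain ⟨w, hw, rfl⟩ := hm.1
    refine ⟨w.take u.length, supLe_prefix hw (List.take_prefix _ _), ?_⟩
    rw [Pxy_take]
    exact (List.prefix_iff_eq_take.mp (by simpa using hpre)).symm
  · rintro ⟨w, hw, rfl⟩
    have hmem : Pxp w ∈ prefCl (Pxp '' (P.SupLeSet S ∩ P.Lem)) := by
      rw [hNB]; exact ⟨w, hw, rfl⟩
    obtain ⟨p, ⟨v, ⟨hvS, hvM⟩, rfl⟩, hpre⟩ := hmem
    have htake : Pxp w = Pxp (v.take w.length) := by
      rw [Pxp_take]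
      have := List.prefix_iff_eq_take.mp hpre
      rwa [Pxp_length] at this
    have hweq : w = v.take w.length :=
      le_pxp_inj (supLe_le hw) (le_prefix hvM.1 (List.take_prefix _ _)) htake
    refine ⟨Pxy v, ⟨⟨v, hvS, rfl⟩, ⟨v, hvM, rfl⟩⟩, ?_⟩
    rw [hweq, Pxy_take]
    exact List.take_prefix _ _
end

section
/- Let P be an open discrete event system and A_K the completed automaton (with sink q_⊥) of an input-complete Mealy transducer realizing a specification K ⊆ L_{io,m}(P). For the synchronous composition P ∥ A_K, the input-internal projection of the extended language is preserved: P_xp(L_e(P ∥ A_K)) = P_xp(L_e(P)). -/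
/-- A deterministic Mealy transducer with partial transition function. -/
structure Mealy (Qk Sx Sy : Type) where
  q0 : Qk
  delta : Qk → Sx → Option Qk
  gamma : Qk → Sx → Sy
  Qm : Set Qk

namespace Mealy

variable {Qk Sx Sy : Type}

/-- Input-completeness of a Mealy transducer. -/
def InputComplete (M : Mealy Qk Sx Sy) : Prop := ∀ q x, (M.delta q x).isSome

/-- `Path M q w q'` : the run of `M` from `q` reading the inputs of the
input-output word `w` ends at `q'` and produces exactly the outputs of `w`. -/
inductive Path (M : Mealy Qk Sx Sy) : Qk → List (Sx × Sy) → Qk → Prop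
  | nil (q : Qk) : Path M q [] q
  | cons {q q' q'' : Qk} {x : Sx} {y : Sy} {w : List (Sx × Sy)} :
      M.delta q x = some q' → y = M.gamma q x → Path M q' w q'' →
      Path M q ((x, y) :: w) q''

/-- The (input-output) language of `M`. -/
def Lang (M : Mealy Qk Sx Sy) : Set (List (Sx × Sy)) :=
  {w | ∃ qf, M.Path M.q0 w qf}

/-- The marked (input-output) language of `M`. -/
def LangM (M : Mealy Qk Sx Sy) : Set (List (Sx × Sy)) :=
  {w | ∃ qf, M.Path M.q0 w qf ∧ qf ∈ M.Qm}

/-- One step of the completed automaton `A_K`: states are `Option Qk` where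
`none` is the dummy sink state `q_⊥`. -/
def akStep [DecidableEq Sy] (M : Mealy Qk Sx Sy) (s : Option Qk) (xy : Sx × Sy) :
    Option Qk :=
  s.bind fun q => (M.delta q xy.1).bind fun q' =>
    if xy.2 = M.gamma q xy.1 then some q' else none

/-- The run of the completed automaton `A_K` on a word over `Sx × Sy`. -/
def akRun [DecidableEq Sy] (M : Mealy Qk Sx Sy) (s : Option Qk)
    (w : List (Sx × Sy)) : Option Qk :=
  w.foldl (M.akStep) s

end Mealy

/-- The synchronous composition `P ∥ A_K`, itself an open DES with state set
`Q × Option Qk` (the `A_K`-component `none` being the sink `q_⊥`). -/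
def OpenDES.sync {Q Sp Sx Sy Qk : Type} [DecidableEq Sy]
    (P : OpenDES Q Sp Sx Sy) (M : Mealy Qk Sx Sy) :
    OpenDES (Q × Option Qk) Sp Sx Sy where
  q0 := (P.q0, some M.q0)
  delta := fun s x σ =>
    (P.delta s.1 x σ).map fun qp' => (qp', M.akStep s.2 (x, P.gamma s.1 σ))
  gamma := fun s σ => P.gamma s.1 σ
  Qm := {s | s.1 ∈ P.Qm ∧ ∃ qk ∈ M.Qm, s.2 = some qk}

/-- The behavior set `C_K(G)` of the three-player game: extended words generated
through `P ∥ A_K` under some control pattern (a set of internal events containing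
all uncontrollable events `Suc`) that never enter a state whose `A_K`-component
is the sink `q_⊥`. -/
inductive CK {Q Sp Sx Sy Qk : Type} [DecidableEq Sy]
    (P : OpenDES Q Sp Sx Sy) (M : Mealy Qk Sx Sy) (Suc : Set Sp) :
    List (Sx × Sp × Sy) → Prop
  | nil : CK P M Suc []
  | snoc {w : List (Sx × Sp × Sy)} {x : Sx} {σ : Sp} {y : Sy}
      {qp : Q} {qk : Qk} {qp' : Q} :
      CK P M Suc w →
      (P.sync M).run (P.sync M).q0 (Pxp w) = some (qp, some qk) →
      (∃ θ : Set Sp, Suc ⊆ θ ∧ σ ∈ θ) →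
      P.delta qp x σ = some qp' →
      (M.akStep (some qk) (x, P.gamma qp σ)).isSome →
      y = P.gamma qp σ →
      CK P M Suc (w ++ [(x, σ, y)])

/-- `K` is `SP`-realizable: `C_K(G)` is nonempty and every word of `C_K(G)`
extends within `C_K(G)` to a word whose input-output projection lies in `K`. -/
def SPRealizable {Q Sp Sx Sy Qk : Type} [DecidableEq Sy]
    (P : OpenDES Q Sp Sx Sy) (M : Mealy Qk Sx Sy) (Suc : Set Sp)
    (K : Set (List (Sx × Sy))) : Prop :=
  {w | CK P M Suc w}.Nonempty ∧
  ∀ w, CK P M Suc w → ∃ w', CK P M Suc w' ∧ w <+: w' ∧ Pxy w' ∈ K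

lemma sync_run_fst {Q Sp Sx Sy Qk : Type} [DecidableEq Sy]
    (P : OpenDES Q Sp Sx Sy) (M : Mealy Qk Sx Sy) :
    ∀ (u : List (Sx × Sp)) (p : Q) (s : Option Qk),
      ((P.sync M).run (p, s) u).map Prod.fst = P.run p u
  | [], _, _ => rfl
  | (x, σ) :: t, p, s => by
      cases h : P.delta p x σ with
      | none => simp [OpenDES.run, OpenDES.sync, h]
      | some p' =>
          have he : (P.sync M).run (p, s) ((x, σ) :: t)
              = (P.sync M).run (p', M.akStep s (x, P.gamma p σ)) t := by
            simp [OpenDES.run, OpenDES.sync, h]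
          have he2 : P.run p ((x, σ) :: t) = P.run p' t := by
            simp [OpenDES.run, h]
          rw [he, he2, sync_run_fst P M t]

lemma sync_Le_iff {Q Sp Sx Sy Qk : Type} [DecidableEq Sy]
    (P : OpenDES Q Sp Sx Sy) (M : Mealy Qk Sx Sy)
    (w : List (Sx × Sp × Sy)) : (P.sync M).Le w ↔ P.Le w := by
  constructor
  · intro h
    induction h with
    | nil => exact OpenDES.Le.nil
    | @snoc w x σ y q hw hrun hdel hy ih =>
        have hfst := sync_run_fst P M (Pxp w) P.q0 (some M.q0)
        have hq0 : (P.sync M).q0 = (P.q0, some M.q0) := rfl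
        rw [hq0.symm, hrun] at hfst
        refine OpenDES.Le.snoc ih hfst.symm ?_ ?_
        · simpa [OpenDES.sync] using hdel
        · simpa [OpenDES.sync] using hy
  · intro h
    induction h with
    | nil => exact OpenDES.Le.nil
    | @snoc w x σ y q hw hrun hdel hy ih =>
        have hfst := sync_run_fst P M (Pxp w) P.q0 (some M.q0)
        rw [hrun] at hfst
        obtain ⟨z, hz, hz1⟩ : ∃ z, (P.sync M).run (P.q0, some M.q0) (Pxp w)
            = some z ∧ z.1 = q := by
          cases hr : (P.sync M).run (P.q0, some M.q0) (Pxp w) with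
          | none => rw [hr] at hfst; simp at hfst
          | some z => rw [hr] at hfst; exact ⟨z, rfl, by simpa using hfst⟩
        have hq0 : (P.sync M).q0 = (P.q0, some M.q0) := rfl
        refine OpenDES.Le.snoc ih (by rw [hq0]; exact hz) ?_ ?_
        · obtain ⟨z1, z2⟩ := z
          simp at hz1; subst hz1
          simpa [OpenDES.sync, Option.isSome_map] using hdel
        · obtain ⟨z1, z2⟩ := z
          simp at hz1; subst hz1
          simpa [OpenDES.sync] using hy

/-- For the synchronous composition `P ∥ A_K` of an open DES `P`
with the completed automaton `A_K` of an input-complete Mealy transducer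
realizing `K ⊆ L_{io,m}(P)`, the input-internal projection of the extended
language is preserved: `P_xp(L_e(P ∥ A_K)) = P_xp(L_e(P))`. -/
theorem sync_preserves_xp_projection
    {Q Sp Sx Sy Qk : Type} [DecidableEq Sy]
    (P : OpenDES Q Sp Sx Sy) (hP : P.InputEnabled)
    (M : Mealy Qk Sx Sy) (hM : M.InputComplete)
    (K : Set (List (Sx × Sy))) (hMK : M.LangM = K) (hKsub : K ⊆ P.Liom) :
    Pxp '' (P.sync M).LeSet = Pxp '' P.LeSet := by
  have : (P.sync M).LeSet = P.LeSet := by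
    ext w; exact sync_Le_iff P M w
  rw [this]
end

section
/- Let P be an open discrete event system and A_K the completed automaton (with sink q_⊥) of an input-complete Mealy transducer realizing a specification K ⊆ L_{io,m}(P). Then the marked input-output language of the synchronous composition equals the specification: L_{io,m}(P ∥ A_K) = K. -/
section Aux

variable {Q Sp Sx Sy Qk : Type} [DecidableEq Sy]

lemma OpenDES.run_append (P : OpenDES Q Sp Sx Sy) (u v : List (Sx × Sp)) (q : Q) :
    P.run q (u ++ v) = (P.run q u).bind fun q' => P.run q' v := by
  induction u generalizing q with
  | nil => simp [OpenDES.run]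
  | cons a u ih =>
    obtain ⟨x, σ⟩ := a
    simp only [List.cons_append, OpenDES.run]
    cases P.delta q x σ with
    | none => simp
    | some q' => simpa using ih q'

lemma Mealy.akRun_none (M : Mealy Qk Sx Sy) (v : List (Sx × Sy)) :
    M.akRun none v = none := by
  induction v with
  | nil => rfl
  | cons a v ih => simpa [Mealy.akRun, Mealy.akStep] using ih

lemma Mealy.akRun_append (M : Mealy Qk Sx Sy) (s : Option Qk) (u v : List (Sx × Sy)) :
    M.akRun s (u ++ v) = M.akRun (M.akRun s u) v := by
  simp [Mealy.akRun, List.foldl_append]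

lemma Mealy.path_akRun (M : Mealy Qk Sx Sy) {q q' : Qk} {v : List (Sx × Sy)}
    (h : M.Path q v q') : M.akRun (some q) v = some q' := by
  induction h with
  | nil => rfl
  | cons h1 h2 _ ih =>
    simpa [Mealy.akRun, Mealy.akStep, h1, h2] using ih

lemma Mealy.akRun_path (M : Mealy Qk Sx Sy) {q q' : Qk} {v : List (Sx × Sy)}
    (h : M.akRun (some q) v = some q') : M.Path q v q' := by
  induction v generalizing q with
  | nil =>
    simp only [Mealy.akRun, List.foldl_nil, Option.some.injEq] at h
    subst h
    exact Mealy.Path.nil _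
  | cons a v ih =>
    obtain ⟨x, y⟩ := a
    have h' : M.akRun (M.akStep (some q) (x, y)) v = some q' := h
    rcases hs : M.akStep (some q) (x, y) with _ | q1
    · rw [hs, M.akRun_none] at h'; exact absurd h' (by simp)
    · rw [hs] at h'
      rcases hd : M.delta q x with _ | q2
      · simp [Mealy.akStep, hd] at hs
      · have hy : y = M.gamma q x ∧ q2 = q1 := by
          by_cases hyy : y = M.gamma q x
          · refine ⟨hyy, ?_⟩
            simpa [Mealy.akStep, hd, hyy] using hs
          · simp [Mealy.akStep, hd, hyy] at hs
        exact Mealy.Path.cons (hd.trans (by rw [hy.2])) hy.1 (ih h')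

/-- Forward direction: a word of `L_e(P)` is in `L_e(P ∥ A_K)` and the
composed run tracks both the `P`-run and the `A_K`-run. -/
lemma sync_of_Le (P : OpenDES Q Sp Sx Sy) (M : Mealy Qk Sx Sy)
    {w : List (Sx × Sp × Sy)} (h : P.Le w) :
    (P.sync M).Le w ∧
      (P.sync M).run (P.sync M).q0 (Pxp w) =
        (P.run P.q0 (Pxp w)).map fun q => (q, M.akRun (some M.q0) (Pxy w)) := by
  induction h with
  | nil =>
    exact ⟨OpenDES.Le.nil, by simp [OpenDES.run, OpenDES.sync, Pxp, Pxy, Mealy.akRun]⟩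
  | @snoc w x σ y q hw hrun hdelta hy ih =>
    obtain ⟨hle, heq⟩ := ih
    rw [hrun] at heq
    have hPxp : Pxp (w ++ [(x, σ, y)]) = Pxp w ++ [(x, σ)] := by simp [Pxp]
    have hPxy : Pxy (w ++ [(x, σ, y)]) = Pxy w ++ [(x, y)] := by simp [Pxy]
    obtain ⟨q', hq'⟩ := Option.isSome_iff_exists.mp hdelta
    have hstep : (P.sync M).run (q, M.akRun (some M.q0) (Pxy w)) [(x, σ)] =
        some (q', M.akStep (M.akRun (some M.q0) (Pxy w)) (x, P.gamma q σ)) := by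
      simp [OpenDES.run, OpenDES.sync, hq']
    have hrun' : (P.sync M).run (P.sync M).q0 (Pxp (w ++ [(x, σ, y)])) =
        some (q', M.akStep (M.akRun (some M.q0) (Pxy w)) (x, P.gamma q σ)) := by
      rw [hPxp, OpenDES.run_append, heq]
      simpa using hstep
    constructor
    · refine OpenDES.Le.snoc hle heq ?_ ?_
      · simp [OpenDES.sync, hq']
      · simpa [OpenDES.sync] using hy
    · rw [hrun', hPxp, hPxy, OpenDES.run_append, hrun, M.akRun_append]
      simp [OpenDES.run, hq', Mealy.akRun, hy]

/-- Backward direction: a word of `L_e(P ∥ A_K)` is in `L_e(P)` and the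
composed run tracks both the `P`-run and the `A_K`-run. -/
lemma Le_of_sync (P : OpenDES Q Sp Sx Sy) (M : Mealy Qk Sx Sy)
    {w : List (Sx × Sp × Sy)} (h : (P.sync M).Le w) :
    P.Le w ∧
      (P.sync M).run (P.sync M).q0 (Pxp w) =
        (P.run P.q0 (Pxp w)).map fun q => (q, M.akRun (some M.q0) (Pxy w)) := by
  induction h with
  | nil =>
    exact ⟨OpenDES.Le.nil, by simp [OpenDES.run, OpenDES.sync, Pxp, Pxy, Mealy.akRun]⟩
  | @snoc w x σ y s hw hrun hdelta hy ih =>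
    obtain ⟨hle, heq⟩ := ih
    have hPrun : ∃ q, P.run P.q0 (Pxp w) = some q := by
      rcases hq : P.run P.q0 (Pxp w) with _ | q
      · rw [heq, hq] at hrun; exact absurd hrun (by simp)
      · exact ⟨q, rfl⟩
    obtain ⟨q, hq⟩ := hPrun
    have hs : s = (q, M.akRun (some M.q0) (Pxy w)) := by
      rw [heq, hq] at hrun; simpa using hrun.symm
    subst hs
    have hdP : (P.delta q x σ).isSome := by
      rcases hd : P.delta q x σ with _ | q'
      · simp [OpenDES.sync, hd] at hdelta
      · simp
    obtain ⟨q', hq'⟩ := Option.isSome_iff_exists.mp hdP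
    have hyP : y = P.gamma q σ := by simpa [OpenDES.sync] using hy
    have hPxp : Pxp (w ++ [(x, σ, y)]) = Pxp w ++ [(x, σ)] := by simp [Pxp]
    have hPxy : Pxy (w ++ [(x, σ, y)]) = Pxy w ++ [(x, y)] := by simp [Pxy]
    constructor
    · exact OpenDES.Le.snoc hle hq hdP hyP
    · rw [hPxp, hPxy, OpenDES.run_append, OpenDES.run_append, heq, hq, M.akRun_append]
      simp [OpenDES.run, OpenDES.sync, hq', Mealy.akRun, hyP]

end Aux

/-- For the synchronous composition `P ∥ A_K` of an open DES `P`
with the completed automaton `A_K` of an input-complete Mealy transducer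
realizing `K ⊆ L_{io,m}(P)`, the marked input-output language equals the
specification: `L_{io,m}(P ∥ A_K) = K`. -/
theorem sync_marked_io_language_eq_spec
    {Q Sp Sx Sy Qk : Type} [DecidableEq Sy]
    (P : OpenDES Q Sp Sx Sy) (hP : P.InputEnabled)
    (M : Mealy Qk Sx Sy) (hM : M.InputComplete)
    (K : Set (List (Sx × Sy))) (hMK : M.LangM = K) (hKsub : K ⊆ P.Liom) :
    (P.sync M).Liom = K := by
  apply Set.Subset.antisymm
  · rintro v ⟨w, ⟨hle, s, hrun, hs1, qk, hqk, hs2⟩, rfl⟩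
    obtain ⟨hleP, heq⟩ := Le_of_sync P M hle
    have hPrun : ∃ q, P.run P.q0 (Pxp w) = some q := by
      rcases hq : P.run P.q0 (Pxp w) with _ | q
      · rw [heq, hq] at hrun; exact absurd hrun (by simp)
      · exact ⟨q, rfl⟩
    obtain ⟨q, hq⟩ := hPrun
    have hs : s = (q, M.akRun (some M.q0) (Pxy w)) := by
      rw [heq, hq] at hrun; simpa using hrun.symm
    subst hs
    have hak : M.akRun (some M.q0) (Pxy w) = some qk := hs2
    have hpath : M.Path M.q0 (Pxy w) qk := M.akRun_path hak
    rw [← hMK]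
    exact ⟨qk, hpath, hqk⟩
  · intro v hv
    obtain ⟨w, ⟨hleP, q, hq, hqm⟩, rfl⟩ := hKsub hv
    rw [← hMK] at hv
    obtain ⟨qf, hpath, hqf⟩ := hv
    have hak : M.akRun (some M.q0) (Pxy w) = some qf := M.path_akRun hpath
    obtain ⟨hle, heq⟩ := sync_of_Le P M hleP
    rw [hq, hak] at heq
    refine ⟨w, ⟨hle, (q, some qf), by simpa using heq, hqm, qf, hqf, rfl⟩, rfl⟩
end
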